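/- The functions μ ↦ log Φ((a − μ)/σ) and μ ↦ log(1 − Φ((b − μ)/σ)) are concave on ℝ for any fixed σ > 0, a, b ∈ ℝ. -/

import Mathlib

open MeasureTheory ProbabilityTheory Real Set Filter Topology

/-- The standard normal cumulative distribution function `Φ`. -/
noncomputable def stdNormalCDF (x : ℝ) : ℝ :=
  ∫ t in Set.Iic x, gaussianPDFReal 0 1 t

namespace StdNormalAux

noncomputable def phi (x : ℝ) : ℝ := gaussianPDFReal 0 1 x

lemma phi_eq (x : ℝ) : phi x = (Real.sqrt (2 * Real.pi))⁻¹ * Real.exp (-x ^ 2 / 2) := by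
  simp [phi, gaussianPDFReal]

lemma phi_pos (x : ℝ) : 0 < phi x := gaussianPDFReal_pos 0 1 x one_ne_zero

lemma phi_even (x : ℝ) : phi (-x) = phi x := by
  simp [phi_eq]

lemma phi_integrable : Integrable phi := integrable_gaussianPDFReal 0 1

lemma phi_continuous : Continuous phi := by
  simp only [funext phi_eq]
  fun_prop

lemma phi_hasDerivAt (x : ℝ) : HasDerivAt phi (-x * phi x) x := by
  have : HasDerivAt (fun y : ℝ => (Real.sqrt (2 * Real.pi))⁻¹ * Real.exp (-y ^ 2 / 2))
      ((Real.sqrt (2 * Real.pi))⁻¹ * (Real.exp (-x ^ 2 / 2) * (-x))) x := by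
    have h1 : HasDerivAt (fun y : ℝ => -y ^ 2 / 2) (-x) x := by
      have := ((hasDerivAt_pow 2 x).neg).div_const 2
      exact this.congr_deriv (by ring)
    exact (h1.exp).const_mul _
  refine HasDerivAt.congr_of_eventuallyEq ?_ (by filter_upwards with y; rw [phi_eq y])
  refine this.congr_deriv ?_
  rw [phi_eq x]; ring

lemma mul_phi_integrable : Integrable (fun t : ℝ => t * phi t) := by
  have h := (integrable_mul_exp_neg_mul_sq (b := 1/2) (by norm_num)).const_mul
    (Real.sqrt (2 * Real.pi))⁻¹
  refine h.congr (by filter_upwards with t; rw [phi_eq]; ring_nf)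

lemma phi_tendsto_atBot : Tendsto phi atBot (𝓝 0) := by
  have hsq : Tendsto (fun y : ℝ => y ^ 2) atBot atTop := by
    have h := (tendsto_neg_atBot_atTop : Tendsto (fun y : ℝ => -y) atBot atTop)
    exact (h.atTop_mul_atTop₀ h).congr fun y => by ring
  have h1 : Tendsto (fun y : ℝ => -y ^ 2 / 2) atBot atBot := by
    apply Filter.Tendsto.atBot_div_const (by norm_num)
    exact tendsto_neg_atTop_atBot.comp hsq
  have h2 : Tendsto (fun y : ℝ => (Real.sqrt (2 * Real.pi))⁻¹ * Real.exp (-y ^ 2 / 2))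
      atBot (𝓝 ((Real.sqrt (2 * Real.pi))⁻¹ * 0)) :=
    (Real.tendsto_exp_atBot.comp h1).const_mul _
  rw [mul_zero] at h2
  exact h2.congr fun y => (phi_eq y).symm

lemma total : ∫ t, phi t = 1 := integral_gaussianPDFReal_eq_one 0 one_ne_zero

lemma Phi_eq (x : ℝ) : stdNormalCDF x = ∫ t in Set.Iic x, phi t := rfl

lemma Phi_pos (x : ℝ) : 0 < stdNormalCDF x := by
  rw [Phi_eq, setIntegral_pos_iff_support_of_nonneg_ae
    (ae_of_all _ fun t => (phi_pos t).le) (phi_integrable.integrableOn)]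
  have hs : Function.support phi = Set.univ := by
    ext t; simp [(phi_pos t).ne']
  rw [hs, Set.univ_inter]
  simp [Real.volume_Iic]

lemma Phi_add_Ioi (x : ℝ) : stdNormalCDF x + ∫ t in Set.Ioi x, phi t = 1 := by
  rw [Phi_eq, intervalIntegral.integral_Iic_add_Ioi phi_integrable.integrableOn phi_integrable.integrableOn, total]

lemma Phi_lt_one (x : ℝ) : stdNormalCDF x < 1 := by
  have h := Phi_add_Ioi x
  have hpos : 0 < ∫ t in Set.Ioi x, phi t := by
    rw [setIntegral_pos_iff_support_of_nonneg_ae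
      (ae_of_all _ fun t => (phi_pos t).le) (phi_integrable.integrableOn)]
    have hs : Function.support phi = Set.univ := by
      ext t; simp [(phi_pos t).ne']
    rw [hs, Set.univ_inter]
    simp [Real.volume_Ioi]
  linarith

lemma Phi_neg (x : ℝ) : stdNormalCDF (-x) = 1 - stdNormalCDF x := by
  have h1 : stdNormalCDF (-x) = ∫ t in Set.Ioi x, phi t := by
    rw [Phi_eq, ← integral_comp_neg_Ioi]
    exact setIntegral_congr_fun measurableSet_Ioi fun t _ => phi_even t
  have := Phi_add_Ioi x
  linarith

lemma Phi_hasDerivAt (x : ℝ) : HasDerivAt stdNormalCDF (phi x) x := by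
  have heq : ∀ y : ℝ, stdNormalCDF y = stdNormalCDF 0 + ∫ t in (0:ℝ)..y, phi t := by
    intro y
    rw [Phi_eq, Phi_eq, ← intervalIntegral.integral_Iic_sub_Iic
      phi_integrable.integrableOn phi_integrable.integrableOn]
    ring
  have h : HasDerivAt (fun y : ℝ => stdNormalCDF 0 + ∫ t in (0:ℝ)..y, phi t) (phi x) x := by
    refine HasDerivAt.const_add _ ?_
    exact intervalIntegral.integral_hasDerivAt_right
      (phi_continuous.intervalIntegrable _ _)
      (phi_continuous.stronglyMeasurable.stronglyMeasurableAtFilter)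
      phi_continuous.continuousAt
  exact h.congr_of_eventuallyEq (by filter_upwards with y; rw [heq y])

lemma neg_mul_phi_integral (x : ℝ) : ∫ t in Set.Iic x, -t * phi t = phi x := by
  have := integral_Iic_of_hasDerivAt_of_tendsto' (a := x) (f := phi)
    (f' := fun t => -t * phi t) (m := 0)
    (fun t _ => phi_hasDerivAt t)
    ((mul_phi_integrable.neg.congr (by filter_upwards with t; simp [neg_mul])).integrableOn)
    phi_tendsto_atBot
  simpa using this

lemma mills (x : ℝ) : 0 ≤ x * stdNormalCDF x + phi x := by
  rcases le_or_gt 0 x with hx | hx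
  · have := (Phi_pos x).le
    nlinarith [phi_pos x]
  · have key : -x * stdNormalCDF x ≤ phi x := by
      rw [← neg_mul_phi_integral x, Phi_eq, ← integral_const_mul]
      refine setIntegral_mono_on
        ((phi_integrable.integrableOn).const_mul _)
        ((mul_phi_integrable.neg.congr (by filter_upwards with t; simp [neg_mul])).integrableOn)
        measurableSet_Iic fun t ht => ?_
      have ht' : t ≤ x := ht
      have := (phi_pos t).le
      nlinarith
    linarith

lemma logPhi_hasDerivAt (x : ℝ) :
    HasDerivAt (fun y => Real.log (stdNormalCDF y)) (phi x / stdNormalCDF x) x :=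
  (Phi_hasDerivAt x).log (Phi_pos x).ne'

lemma deriv_logPhi : deriv (fun y => Real.log (stdNormalCDF y))
    = fun x => phi x / stdNormalCDF x :=
  funext fun x => (logPhi_hasDerivAt x).deriv

lemma deriv2_hasDerivAt (x : ℝ) :
    HasDerivAt (deriv (fun y => Real.log (stdNormalCDF y)))
      ((-x * phi x * stdNormalCDF x - phi x * phi x) / (stdNormalCDF x) ^ 2) x := by
  rw [deriv_logPhi]
  exact (phi_hasDerivAt x).div (Phi_hasDerivAt x) (Phi_pos x).ne'

lemma concave_logPhi : ConcaveOn ℝ Set.univ (fun y => Real.log (stdNormalCDF y)) := by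
  refine concaveOn_of_deriv2_nonpos convex_univ ?_ ?_ ?_ ?_
  · exact (Differentiable.continuous fun x => (logPhi_hasDerivAt x).differentiableAt).continuousOn
  · exact fun x _ => ((logPhi_hasDerivAt x).differentiableAt).differentiableWithinAt
  · exact fun x _ => ((deriv2_hasDerivAt x).differentiableAt).differentiableWithinAt
  · intro x _
    have h2 : deriv^[2] (fun y => Real.log (stdNormalCDF y)) x
        = (-x * phi x * stdNormalCDF x - phi x * phi x) / (stdNormalCDF x) ^ 2 := by
      show deriv (deriv (fun y => Real.log (stdNormalCDF y))) x = _
      exact (deriv2_hasDerivAt x).deriv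
    rw [h2]
    apply div_nonpos_of_nonpos_of_nonneg _ (sq_nonneg _)
    have hm := mills x
    nlinarith [phi_pos x]

end StdNormalAux

/-- the functions `μ ↦ log Φ((a−μ)/σ)` and `μ ↦ log(1 − Φ((b−μ)/σ))` are
concave on `ℝ` for any fixed `σ > 0` and `a, b ∈ ℝ`. -/
theorem log_gaussian_cdf_survival_concave (σ a b : ℝ) (hσ : 0 < σ) :
    ConcaveOn ℝ Set.univ (fun μ : ℝ => Real.log (stdNormalCDF ((a - μ) / σ))) ∧
    ConcaveOn ℝ Set.univ (fun μ : ℝ => Real.log (1 - stdNormalCDF ((b - μ) / σ))) := by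
  have hσ' : σ ≠ 0 := hσ.ne'
  have key : ∀ c d : ℝ, ConcaveOn ℝ Set.univ
      (fun μ : ℝ => Real.log (stdNormalCDF ((c + d * μ) / σ))) := by
    intro c d
    have h := StdNormalAux.concave_logPhi.comp_affineMap
      (AffineMap.lineMap (c / σ) ((c + d) / σ))
    rw [Set.preimage_univ] at h
    refine h.congr fun μ _ => ?_
    simp only [Function.comp_apply, AffineMap.lineMap_apply_module]
    congr 2
    field_simp
    linear_combination (c + μ * d) * mul_inv_cancel₀ hσ'
  constructor
  · have := key a (-1)
    convert this using 2 with μ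
    ring_nf
  · have heq : ∀ μ : ℝ, 1 - stdNormalCDF ((b - μ) / σ) = stdNormalCDF ((-b + 1 * μ) / σ) := by
      intro μ
      rw [← StdNormalAux.Phi_neg]
      congr 1
      field_simp
      ring
    simp only [heq]
    exact key (-b) 1
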